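/- For every real number p > 2 there exists a constant κ_p > 1 such that for every positive integer d and all nonnegative real numbers X₁, …, X_d one has (∑_{i=1}^{d} X_i)^p ≥ ∑_{i=1}^{d} X_i^p + (p/2)·κ_p·∑_{1 ≤ i ≠ j ≤ d} X_i^{p−1} X_j, where the last sum is over ordered pairs (i, j) with i ≠ j. -/

import Mathlib

open Finset Real

lemma two_var_aux (p : ℝ) (hp : 2 < p) {a b : ℝ} (ha : 0 ≤ a) (hb : 0 ≤ b) :
    a ^ p + (p - 1) * (a ^ (p - 1) * b) ≤ a * (a + b) ^ (p - 1) := by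
  rcases eq_or_lt_of_le ha with h0 | hpos
  · simp [← h0, Real.zero_rpow (by linarith : p ≠ 0),
      Real.zero_rpow (by linarith : p - 1 ≠ 0)]
  · have hs : (-1 : ℝ) ≤ b / a := by
      have h0 : (0:ℝ) ≤ b / a := by positivity
      linarith
    have hb1 : 1 + (p - 1) * (b / a) ≤ (1 + b / a) ^ (p - 1) :=
      one_add_mul_self_le_rpow_one_add hs (by linarith)
    have h1 : 1 + b / a = (a + b) / a := by field_simp
    have hap : (0:ℝ) < a ^ p := Real.rpow_pos_of_pos hpos p
    have hmul : a ^ p * (1 + (p - 1) * (b / a)) ≤ a ^ p * ((1 + b / a) ^ (p - 1)) :=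
      mul_le_mul_of_nonneg_left hb1 hap.le
    have hL : a ^ p * (1 + (p - 1) * (b / a)) = a ^ p + (p - 1) * (a ^ (p - 1) * b) := by
      have hpow : a ^ p = a ^ (p - 1) * a := by
        rw [← Real.rpow_add_one hpos.ne' (p - 1)]; ring_nf
      rw [hpow]; field_simp
    have hR : a ^ p * ((1 + b / a) ^ (p - 1)) = a * (a + b) ^ (p - 1) := by
      rw [h1]
      have hpow : a ^ p = a * a ^ (p - 1) := by
        rw [mul_comm, ← Real.rpow_add_one hpos.ne' (p - 1)]; norm_num
      rw [hpow, mul_assoc, ← Real.mul_rpow hpos.le (by positivity)]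
      congr 2
      field_simp
    linarith [hmul, hL ▸ hmul, hR]

theorem stmt4 (p : ℝ) (hp : 2 < p) :
    ∃ κ : ℝ, 1 < κ ∧
      ∀ (d : ℕ), 0 < d → ∀ X : Fin d → ℝ, (∀ i, 0 ≤ X i) →
        ∑ i, X i ^ p + p / 2 * κ *
            ∑ i, ∑ j ∈ Finset.univ \ {i}, X i ^ (p - 1) * X j ≤
          (∑ i, X i) ^ p := by
  have hp0 : (0:ℝ) < p := by linarith
  refine ⟨2 - 2 / p, by have h2 : 2 / p < 1 := (div_lt_one hp0).mpr (by linarith); linarith, ?_⟩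
  intro d hd X hX
  have hc : p / 2 * (2 - 2 / p) = p - 1 := by field_simp
  rw [hc]
  have hS0 : 0 ≤ ∑ i, X i := Finset.sum_nonneg fun i _ => hX i
  rcases eq_or_lt_of_le hS0 with h0 | hpos
  · have hall : ∀ i ∈ Finset.univ, X i = 0 :=
      (Finset.sum_eq_zero_iff_of_nonneg (fun i _ => hX i)).mp h0.symm
    have hall' : ∀ i : Fin d, X i = 0 := fun i => hall i (Finset.mem_univ i)
    simp [hall', Real.zero_rpow (by linarith : p ≠ 0)]
  · set S := ∑ i, X i with hS
    have key : ∀ i ∈ Finset.univ, X i ^ p + ∑ j ∈ Finset.univ \ {i},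
        (p - 1) * (X i ^ (p - 1) * X j) ≤ X i * S ^ (p - 1) := by
      intro i _
      have hTi : ∑ j ∈ Finset.univ \ {i}, X j = S - X i := by
        rw [Finset.sum_sdiff_eq_sub (Finset.subset_univ _)]
        simp [hS]
      have hT0 : 0 ≤ S - X i := by
        rw [← hTi]; exact Finset.sum_nonneg fun j _ => hX j
      have := two_var_aux p hp (hX i) hT0
      rw [show X i + (S - X i) = S by ring] at this
      calc X i ^ p + ∑ j ∈ Finset.univ \ {i}, (p - 1) * (X i ^ (p - 1) * X j)
          = X i ^ p + (p - 1) * (X i ^ (p - 1) * (S - X i)) := by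
            rw [← hTi]
            simp [Finset.mul_sum, mul_sub]
        _ ≤ X i * S ^ (p - 1) := this
    have hsum : ∑ i, (X i ^ p + ∑ j ∈ Finset.univ \ {i},
        (p - 1) * (X i ^ (p - 1) * X j)) ≤ ∑ i, X i * S ^ (p - 1) :=
      Finset.sum_le_sum key
    have hRHS : ∑ i, X i * S ^ (p - 1) = S ^ p := by
      rw [← Finset.sum_mul, ← hS, mul_comm, ← Real.rpow_add_one hpos.ne' (p - 1)]
      norm_num
    have hLHS : ∑ i, X i ^ p + (p - 1) *
        ∑ i, ∑ j ∈ Finset.univ \ {i}, X i ^ (p - 1) * X j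
        = ∑ i, (X i ^ p + ∑ j ∈ Finset.univ \ {i}, (p - 1) * (X i ^ (p - 1) * X j)) := by
      rw [Finset.sum_add_distrib, Finset.mul_sum]
      congr 1
      apply Finset.sum_congr rfl
      intro i _
      rw [Finset.mul_sum]
    rw [hLHS]
    rw [hRHS] at hsum
    exact hsum
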